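/- Let r ≥ 1 and let h : X_1 × ⋯ × X_r → ℝ on finite nonempty sets, and let A_j ⊆ ∏_{i≠j} X_i for j ∈ [r]. Then |E_{x_1,…,x_r}[h(x_1,…,x_r) ∏_{j=1}^r 1_{A_j}(x_{−j})]| ≤ ‖h‖_{U^r}, where ‖h‖_{U^r} is the Gowers box norm defined by ‖h‖_{U^r}^{2^r} = E_{x_i^{(0)},x_i^{(1)}} ∏_{ω ∈ {0,1}^r} h(x^{(ω)}). Consequently ‖h‖_{□,r} ≤ ‖h‖_{U^r}. -/

import Mathlib

open scoped Classical

set_option linter.unusedSectionVars false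
set_option linter.unusedVariables false

namespace GCS15

lemma sum_boolfun {α : Type*} [Fintype α] (f : α → α → ℝ) :
    ∑ c : Bool → α, f (c false) (c true) = ∑ a : α, ∑ b : α, f a b := by
  have : ∑ c : Bool → α, f (c false) (c true) = ∑ p : α × α, f p.1 p.2 :=
    Fintype.sum_equiv ⟨fun c => (c false, c true), fun p b => Bool.rec p.1 p.2 b,
      (fun c => by funext b; cases b <;> rfl), fun p => rfl⟩ _ _ (fun c => rfl)
  rw [this, Fintype.sum_prod_type]

lemma sum_boolfun_one {α : Type*} [Fintype α] (g : α → ℝ) :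
    ∑ c : Bool → α, g (c false) = (Fintype.card α : ℝ) * ∑ a : α, g a := by
  rw [sum_boolfun (fun a _ => g a)]
  simp only [Finset.sum_const, nsmul_eq_mul, Finset.card_univ]
  rw [← Finset.mul_sum]

variable {r : ℕ} {X : Fin r → Type*} [∀ i, Fintype (X i)]

noncomputable def Y (x : ∀ i, Bool → X i) (ω : Fin r → Bool) : ∀ i, X i := fun i => x i (ω i)

noncomputable def ind (A : (j : Fin r) → Set (∀ i : {i : Fin r // i ≠ j}, X i.1))
    (j : Fin r) (z : ∀ i, X i) : ℝ := (A j).indicator 1 (fun i => z i.1)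

noncomputable def Om (r k : ℕ) : Finset (Fin r → Bool) :=
  Finset.univ.filter (fun ω => ∀ i : Fin r, ω i = true → i.1 < k)

noncomputable def Jf (r k : ℕ) : Finset (Fin r) := Finset.univ.filter (fun j => k ≤ j.1)

noncomputable def P (h : (∀ i, X i) → ℝ) (A : (j : Fin r) → Set (∀ i : {i : Fin r // i ≠ j}, X i.1))
    (k : ℕ) (x : ∀ i, Bool → X i) : ℝ :=
  ∏ ω ∈ Om r k, (h (Y x ω) * ∏ j ∈ Jf r k, ind A j (Y x ω))

noncomputable def T (h : (∀ i, X i) → ℝ) (A : (j : Fin r) → Set (∀ i : {i : Fin r // i ≠ j}, X i.1))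
    (k : ℕ) : ℝ :=
  (∑ x : ∀ i, Bool → X i, P h A k x) / (Fintype.card (∀ i, Bool → X i) : ℝ)

lemma Om_zero : Om r 0 = {fun _ => false} := by
  ext ω
  simp only [Om, Finset.mem_filter, Finset.mem_univ, true_and, Finset.mem_singleton]
  constructor
  · intro hω; funext i
    by_contra hb
    exact Nat.not_lt_zero _ (hω i (by revert hb; cases ω i <;> simp))
  · rintro rfl i hi; simp at hi

lemma Om_top : Om r r = Finset.univ := by
  ext ω; simp [Om, Fin.is_lt]

lemma Jf_top : Jf r r = ∅ := by
  ext j; simp [Jf, Nat.not_le.2 j.is_lt]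

lemma Jf_zero : Jf r 0 = Finset.univ := by
  ext j; simp [Jf]

lemma card_pi_bool [∀ i, Nonempty (X i)] :
    Fintype.card (∀ i, Bool → X i) = (Fintype.card (∀ i, X i)) ^ 2 := by
  rw [Fintype.card_congr (Equiv.piComm (fun (i : Fin r) (_ : Bool) => X i)),
    Fintype.card_fun]
  simp

lemma T_zero (h : (∀ i, X i) → ℝ) (A : (j : Fin r) → Set (∀ i : {i : Fin r // i ≠ j}, X i.1))
    [∀ i, Nonempty (X i)] :
    T h A 0 = (∑ x : ∀ i, X i, h x * ∏ j, (A j).indicator 1 (fun i => x i.1)) /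
      (Fintype.card (∀ i, X i) : ℝ) := by
  have hsum : ∑ x : ∀ i, Bool → X i, P h A 0 x
      = (Fintype.card (∀ i, X i) : ℝ) *
        ∑ z : ∀ i, X i, (h z * ∏ j, (A j).indicator 1 (fun i => z i.1)) := by
    calc ∑ x : ∀ i, Bool → X i, P h A 0 x
        = ∑ c : Bool → ∀ i, X i,
            (h (c false) * ∏ j, (A j).indicator 1 (fun i => c false i.1)) := by
          refine Fintype.sum_equiv (Equiv.piComm (fun (i : Fin r) (_ : Bool) => X i)) _ _
            (fun x => ?_)
          rw [P, Om_zero, Jf_zero, Finset.prod_singleton]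
          rfl
      _ = (Fintype.card (∀ i, X i) : ℝ) *
            ∑ z : ∀ i, X i, (h z * ∏ j, (A j).indicator 1 (fun i => z i.1)) :=
          sum_boolfun_one (fun z => h z * ∏ j, (A j).indicator 1 (fun i => z i.1))
  rw [T, hsum, card_pi_bool]
  have hc : (0 : ℝ) < (Fintype.card (∀ i, X i) : ℝ) := by
    exact_mod_cast Fintype.card_pos
  field_simp
  push_cast
  ring

lemma indicator_one_le_one {α : Type*} (s : Set α) (a : α) :
    s.indicator (1 : α → ℝ) a ≤ 1 := by
  by_cases hm : a ∈ s <;> simp [Set.indicator_of_mem, Set.indicator_of_notMem, hm]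

lemma T_top (h : (∀ i, X i) → ℝ) (A : (j : Fin r) → Set (∀ i : {i : Fin r // i ≠ j}, X i.1)) :
    T h A r = (∑ x : ∀ i : Fin r, Bool → X i,
        ∏ ω : Fin r → Bool, h (fun i => x i (ω i))) /
      (Fintype.card (∀ i : Fin r, Bool → X i) : ℝ) := by
  rw [T]
  congr 1
  refine Finset.sum_congr rfl fun x _ => ?_
  rw [P, Om_top, Jf_top]
  simp only [Finset.prod_empty, mul_one]
  rfl

lemma mem_Om {k : ℕ} {ω : Fin r → Bool} : ω ∈ Om r k ↔ ∀ i : Fin r, ω i = true → i.1 < k := by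
  simp [Om]

lemma Om_false {k : ℕ} {ω : Fin r → Bool} (hω : ω ∈ Om r k) {i : Fin r} (hi : k ≤ i.1) :
    ω i = false := by
  cases hb : ω i with
  | false => rfl
  | true => exact absurd (mem_Om.1 hω i hb) (Nat.not_lt.2 hi)

noncomputable def S (h : (∀ i, X i) → ℝ)
    (A : (j : Fin r) → Set (∀ i : {i : Fin r // i ≠ j}, X i.1)) (k : ℕ) (κ : Fin r)
    (w : ∀ j : {j : Fin r // j ≠ κ}, Bool → X j.1) (a : X κ) : ℝ :=
  ∏ ω ∈ Om r k,
    (h (Y ((Equiv.piSplitAt κ (fun i => Bool → X i)).symm (fun _ => a, w)) ω) *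
      ∏ j ∈ Jf r (k + 1),
        ind A j (Y ((Equiv.piSplitAt κ (fun i => Bool → X i)).symm (fun _ => a, w)) ω))

noncomputable def U (A : (j : Fin r) → Set (∀ i : {i : Fin r // i ≠ j}, X i.1)) (k : ℕ)
    (κ : Fin r) (w : ∀ j : {j : Fin r // j ≠ κ}, Bool → X j.1) : ℝ :=
  ∏ ω ∈ Om r k, (A κ).indicator 1 (fun i : {i : Fin r // i ≠ κ} => w i (ω i.1))

lemma U_nonneg (A : (j : Fin r) → Set (∀ i : {i : Fin r // i ≠ j}, X i.1)) (k : ℕ)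
    (κ : Fin r) (w : ∀ j : {j : Fin r // j ≠ κ}, Bool → X j.1) : 0 ≤ U A k κ w :=
  Finset.prod_nonneg fun ω _ => Set.indicator_nonneg (fun _ _ => zero_le_one) _

lemma U_le_one (A : (j : Fin r) → Set (∀ i : {i : Fin r // i ≠ j}, X i.1)) (k : ℕ)
    (κ : Fin r) (w : ∀ j : {j : Fin r // j ≠ κ}, Bool → X j.1) : U A k κ w ≤ 1 :=
  Finset.prod_le_one (fun ω _ => Set.indicator_nonneg (fun _ _ => zero_le_one) _)
    (fun ω _ => indicator_one_le_one _ _)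

lemma esymm_eq (κ : Fin r) (c : Bool → X κ) (w : ∀ j : {j : Fin r // j ≠ κ}, Bool → X j.1) :
    (Equiv.piSplitAt κ (fun i => Bool → X i)).symm (c, w) κ = c :=
  congrArg Prod.fst ((Equiv.piSplitAt κ (fun i => Bool → X i)).apply_symm_apply (c, w))

lemma esymm_ne (κ : Fin r) (c : Bool → X κ) (w : ∀ j : {j : Fin r // j ≠ κ}, Bool → X j.1)
    (j : {j : Fin r // j ≠ κ}) :
    (Equiv.piSplitAt κ (fun i => Bool → X i)).symm (c, w) j.1 = w j :=
  congrFun (congrArg Prod.snd ((Equiv.piSplitAt κ (fun i => Bool → X i)).apply_symm_apply (c, w))) j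

lemma Y_esymm_update (κ : Fin r) (c : Bool → X κ)
    (w : ∀ j : {j : Fin r // j ≠ κ}, Bool → X j.1) (ω : Fin r → Bool) (ε : Bool) :
    Y ((Equiv.piSplitAt κ (fun i => Bool → X i)).symm (c, w)) (Function.update ω κ ε)
      = Y ((Equiv.piSplitAt κ (fun i => Bool → X i)).symm (fun _ => c ε, w)) ω := by
  funext i
  rcases eq_or_ne i κ with rfl | hi
  · simp only [Y, Function.update_self]
    rw [congrFun (esymm_eq i c w) ε, congrFun (esymm_eq i (fun _ => c ε) w) (ω i)]
  · simp only [Y, Function.update_of_ne hi]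
    rw [congrFun (esymm_ne κ c w ⟨i, hi⟩) (ω i), congrFun (esymm_ne κ (fun _ => c ε) w ⟨i, hi⟩) (ω i)]

lemma Y_esymm_of_false (κ : Fin r) (c : Bool → X κ)
    (w : ∀ j : {j : Fin r // j ≠ κ}, Bool → X j.1) (ω : Fin r → Bool) (hω : ω κ = false) :
    Y ((Equiv.piSplitAt κ (fun i => Bool → X i)).symm (c, w)) ω
      = Y ((Equiv.piSplitAt κ (fun i => Bool → X i)).symm (fun _ => c false, w)) ω := by
  conv_lhs => rw [← Function.update_eq_self κ ω, hω]
  exact Y_esymm_update κ c w ω false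

lemma Jf_insert {k : ℕ} {κ : Fin r} (hκ : κ.1 = k) : Jf r k = insert κ (Jf r (k + 1)) := by
  ext j
  simp only [Jf, Finset.mem_filter, Finset.mem_univ, true_and, Finset.mem_insert, Fin.ext_iff, hκ]
  omega

lemma κ_not_mem_Jf_succ {k : ℕ} {κ : Fin r} (hκ : κ.1 = k) : κ ∉ Jf r (k + 1) := by
  simp [Jf, hκ]

lemma P_split (h : (∀ i, X i) → ℝ) (A : (j : Fin r) → Set (∀ i : {i : Fin r // i ≠ j}, X i.1))
    {k : ℕ} {κ : Fin r} (hκ : κ.1 = k) (c : Bool → X κ)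
    (w : ∀ j : {j : Fin r // j ≠ κ}, Bool → X j.1) :
    P h A k ((Equiv.piSplitAt κ (fun i => Bool → X i)).symm (c, w))
      = U A k κ w * S h A k κ w (c false) := by
  rw [P, U, S, ← Finset.prod_mul_distrib]
  refine Finset.prod_congr rfl fun ω hω => ?_
  have hωκ : ω κ = false := Om_false hω hκ.ge
  have hY := Y_esymm_of_false κ c w ω hωκ
  rw [hY, Jf_insert hκ, Finset.prod_insert (κ_not_mem_Jf_succ hκ)]
  have hind : ind A κ (Y ((Equiv.piSplitAt κ (fun i => Bool → X i)).symm (fun _ => c false, w)) ω)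
      = (A κ).indicator 1 (fun i : {i : Fin r // i ≠ κ} => w i (ω i.1)) := by
    rw [ind]
    congr 1
    funext i
    exact congrFun (esymm_ne κ (fun _ => c false) w i) (ω i.1)
  rw [hind]
  ring

lemma prod_Om_succ {M : Type*} [CommMonoid M] {k : ℕ} {κ : Fin r} (hκ : κ.1 = k)
    (f : (Fin r → Bool) → M) :
    ∏ ω ∈ Om r (k + 1), f ω = ∏ ε : Bool, ∏ ω ∈ Om r k, f (Function.update ω κ ε) := by
  rw [← Finset.prod_product Finset.univ (Om r k)
    (fun p : Bool × (Fin r → Bool) => f (Function.update p.2 κ p.1))]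
  refine Finset.prod_bij' (i := fun ω _ => ((ω κ, Function.update ω κ false) : Bool × (Fin r → Bool)))
    (j := fun p _ => Function.update p.2 κ p.1) ?_ ?_ ?_ ?_ ?_
  · intro ω hω
    simp only [Finset.mem_product, Finset.mem_univ, true_and]
    rw [mem_Om]
    intro i hi
    rcases eq_or_ne i κ with rfl | hne
    · simp at hi
    · rw [Function.update_of_ne hne] at hi
      have := mem_Om.1 hω i hi
      have : i.1 ≠ k := fun hh => hne (Fin.ext (hh.trans hκ.symm))
      omega
  · intro p hp
    simp only [Finset.mem_product, Finset.mem_univ, true_and] at hp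
    rw [mem_Om]
    intro i hi
    rcases eq_or_ne i κ with rfl | hne
    · omega
    · rw [Function.update_of_ne hne] at hi
      exact Nat.lt_succ_of_lt (mem_Om.1 hp i hi)
  · intro ω hω
    simp only
    funext i
    rcases eq_or_ne i κ with rfl | hne
    · rw [Function.update_self]
    · rw [Function.update_of_ne hne, Function.update_of_ne hne]
  · intro p hp
    simp only [Finset.mem_product, Finset.mem_univ, true_and] at hp
    have hpκ : p.2 κ = false := Om_false hp hκ.ge
    simp only [Function.update_self]
    refine Prod.ext rfl ?_
    simp only
    funext i
    rcases eq_or_ne i κ with rfl | hne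
    · rw [Function.update_self, hpκ]
    · rw [Function.update_of_ne hne, Function.update_of_ne hne]
  · intro ω hω
    dsimp only
    congr 1
    funext i
    rcases eq_or_ne i κ with rfl | hne
    · rw [Function.update_self]
    · rw [Function.update_of_ne hne, Function.update_of_ne hne]

lemma P_succ_split (h : (∀ i, X i) → ℝ)
    (A : (j : Fin r) → Set (∀ i : {i : Fin r // i ≠ j}, X i.1))
    {k : ℕ} {κ : Fin r} (hκ : κ.1 = k) (c : Bool → X κ)
    (w : ∀ j : {j : Fin r // j ≠ κ}, Bool → X j.1) :
    P h A (k + 1) ((Equiv.piSplitAt κ (fun i => Bool → X i)).symm (c, w))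
      = S h A k κ w (c false) * S h A k κ w (c true) := by
  rw [P, prod_Om_succ hκ]
  have key : ∀ ε : Bool,
      (∏ ω ∈ Om r k,
        (h (Y ((Equiv.piSplitAt κ (fun i => Bool → X i)).symm (c, w)) (Function.update ω κ ε)) *
          ∏ j ∈ Jf r (k + 1),
            ind A j (Y ((Equiv.piSplitAt κ (fun i => Bool → X i)).symm (c, w))
              (Function.update ω κ ε))))
      = S h A k κ w (c ε) := by
    intro ε
    rw [S]
    refine Finset.prod_congr rfl fun ω _ => ?_
    rw [Y_esymm_update κ c w ω ε]
  rw [Fintype.prod_bool, key true, key false, mul_comm]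

lemma arith {cκ cW N SUV SQ : ℝ} (hN : N = cκ ^ 2 * cW) (hN0 : 0 < N)
    (hCS : SUV ^ 2 ≤ cW * SQ) : (cκ * SUV) ^ 2 / N ^ 2 ≤ SQ / N := by
  rw [div_le_div_iff₀ (by positivity) hN0]
  have hc2N : (0 : ℝ) ≤ cκ ^ 2 * N := mul_nonneg (sq_nonneg _) hN0.le
  calc (cκ * SUV) ^ 2 * N = SUV ^ 2 * (cκ ^ 2 * N) := by ring
    _ ≤ (cW * SQ) * (cκ ^ 2 * N) := mul_le_mul_of_nonneg_right hCS hc2N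
    _ = SQ * ((cκ ^ 2 * cW) * N) := by ring
    _ = SQ * N ^ 2 := by rw [← hN]; ring

lemma step [∀ i, Nonempty (X i)] (h : (∀ i, X i) → ℝ)
    (A : (j : Fin r) → Set (∀ i : {i : Fin r // i ≠ j}, X i.1)) (k : ℕ) (hk : k < r) :
    (T h A k) ^ 2 ≤ T h A (k + 1) := by
  have hκ : (⟨k, hk⟩ : Fin r).1 = k := rfl
  set κ : Fin r := ⟨k, hk⟩
  have hPk : ∑ x : ∀ i, Bool → X i, P h A k x
      = (Fintype.card (X κ) : ℝ) *
        ∑ w : ∀ j : {j : Fin r // j ≠ κ}, Bool → X j.1,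
          (U A k κ w * ∑ a : X κ, S h A k κ w a) := by
    calc ∑ x : ∀ i, Bool → X i, P h A k x
        = ∑ p : (Bool → X κ) × (∀ j : {j : Fin r // j ≠ κ}, Bool → X j.1),
            P h A k ((Equiv.piSplitAt κ (fun i => Bool → X i)).symm p) :=
          (Equiv.sum_comp (Equiv.piSplitAt κ (fun i => Bool → X i)).symm _).symm
      _ = ∑ c : Bool → X κ, ∑ w : ∀ j : {j : Fin r // j ≠ κ}, Bool → X j.1,
            U A k κ w * S h A k κ w (c false) := by
          rw [Fintype.sum_prod_type]
          exact Finset.sum_congr rfl fun c _ =>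
            Finset.sum_congr rfl fun w _ => P_split h A hκ c w
      _ = ∑ w : ∀ j : {j : Fin r // j ≠ κ}, Bool → X j.1, ∑ c : Bool → X κ,
            U A k κ w * S h A k κ w (c false) := Finset.sum_comm
      _ = ∑ w : ∀ j : {j : Fin r // j ≠ κ}, Bool → X j.1,
            U A k κ w * ((Fintype.card (X κ) : ℝ) * ∑ a : X κ, S h A k κ w a) := by
          refine Finset.sum_congr rfl fun w _ => ?_
          rw [← Finset.mul_sum, sum_boolfun_one (fun a => S h A k κ w a)]
      _ = (Fintype.card (X κ) : ℝ) *
            ∑ w : ∀ j : {j : Fin r // j ≠ κ}, Bool → X j.1,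
              (U A k κ w * ∑ a : X κ, S h A k κ w a) := by
          rw [Finset.mul_sum]
          exact Finset.sum_congr rfl fun w _ => by ring
  have hPk1 : ∑ x : ∀ i, Bool → X i, P h A (k + 1) x
      = ∑ w : ∀ j : {j : Fin r // j ≠ κ}, Bool → X j.1, (∑ a : X κ, S h A k κ w a) ^ 2 := by
    calc ∑ x : ∀ i, Bool → X i, P h A (k + 1) x
        = ∑ p : (Bool → X κ) × (∀ j : {j : Fin r // j ≠ κ}, Bool → X j.1),
            P h A (k + 1) ((Equiv.piSplitAt κ (fun i => Bool → X i)).symm p) :=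
          (Equiv.sum_comp (Equiv.piSplitAt κ (fun i => Bool → X i)).symm _).symm
      _ = ∑ c : Bool → X κ, ∑ w : ∀ j : {j : Fin r // j ≠ κ}, Bool → X j.1,
            S h A k κ w (c false) * S h A k κ w (c true) := by
          rw [Fintype.sum_prod_type]
          exact Finset.sum_congr rfl fun c _ =>
            Finset.sum_congr rfl fun w _ => P_succ_split h A hκ c w
      _ = ∑ w : ∀ j : {j : Fin r // j ≠ κ}, Bool → X j.1, ∑ c : Bool → X κ,
            S h A k κ w (c false) * S h A k κ w (c true) := Finset.sum_comm
      _ = ∑ w : ∀ j : {j : Fin r // j ≠ κ}, Bool → X j.1, (∑ a : X κ, S h A k κ w a) ^ 2 := by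
          refine Finset.sum_congr rfl fun w _ => ?_
          rw [sum_boolfun (fun a b => S h A k κ w a * S h A k κ w b), ← Finset.sum_mul_sum, sq]
  have hVnn : (0 : ℝ) ≤ ∑ w : ∀ j : {j : Fin r // j ≠ κ}, Bool → X j.1,
      (∑ a : X κ, S h A k κ w a) ^ 2 := Finset.sum_nonneg fun w _ => sq_nonneg _
  have hCS : (∑ w : ∀ j : {j : Fin r // j ≠ κ}, Bool → X j.1,
        (U A k κ w * ∑ a : X κ, S h A k κ w a)) ^ 2
      ≤ (Fintype.card (∀ j : {j : Fin r // j ≠ κ}, Bool → X j.1) : ℝ) *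
        ∑ w : ∀ j : {j : Fin r // j ≠ κ}, Bool → X j.1, (∑ a : X κ, S h A k κ w a) ^ 2 := by
    refine le_trans (Finset.sum_mul_sq_le_sq_mul_sq Finset.univ (fun w => U A k κ w)
      (fun w => ∑ a : X κ, S h A k κ w a)) ?_
    refine mul_le_mul_of_nonneg_right ?_ hVnn
    calc ∑ w : ∀ j : {j : Fin r // j ≠ κ}, Bool → X j.1, (U A k κ w) ^ 2
        ≤ ∑ _w : ∀ j : {j : Fin r // j ≠ κ}, Bool → X j.1, (1 : ℝ) :=
          Finset.sum_le_sum fun w _ => by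
            have h0 := U_nonneg A k κ w
            have h1 := U_le_one A k κ w
            nlinarith
      _ = (Fintype.card (∀ j : {j : Fin r // j ≠ κ}, Bool → X j.1) : ℝ) := by simp
  have hN : (Fintype.card (∀ i, Bool → X i) : ℝ)
      = (Fintype.card (X κ) : ℝ) ^ 2 *
        (Fintype.card (∀ j : {j : Fin r // j ≠ κ}, Bool → X j.1) : ℝ) := by
    rw [Fintype.card_congr (Equiv.piSplitAt κ (fun i => Bool → X i)), Fintype.card_prod,
      Fintype.card_fun, Fintype.card_bool]
    push_cast
    ring
  have hN0 : (0 : ℝ) < (Fintype.card (∀ i, Bool → X i) : ℝ) := by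
    exact_mod_cast Fintype.card_pos
  rw [T, T, div_pow, hPk, hPk1]
  exact arith hN hN0 hCS

lemma chain [∀ i, Nonempty (X i)] (h : (∀ i, X i) → ℝ)
    (A : (j : Fin r) → Set (∀ i : {i : Fin r // i ≠ j}, X i.1)) :
    ∀ k, k < r → (T h A 0) ^ (2 ^ (k + 1)) ≤ T h A (k + 1) := by
  intro k
  induction k with
  | zero =>
    intro hk
    simpa using step h A 0 hk
  | succ k ih =>
    intro hk
    have hk' : k < r := by omega
    have h1 := ih hk'
    have h2 : (T h A 0) ^ (2 ^ (k + 2)) = ((T h A 0) ^ (2 ^ (k + 1))) ^ 2 := by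
      rw [pow_succ, pow_mul]
    have hnn : 0 ≤ (T h A 0) ^ (2 ^ (k + 1)) := by
      have h3 : (T h A 0) ^ (2 ^ (k + 1)) = ((T h A 0) ^ (2 ^ k)) ^ 2 := by
        rw [pow_succ, pow_mul]
      rw [h3]; exact sq_nonneg _
    rw [h2]
    calc ((T h A 0) ^ (2 ^ (k + 1))) ^ 2 ≤ (T h A (k + 1)) ^ 2 :=
        pow_le_pow_left₀ hnn h1 2
      _ ≤ T h A (k + 2) := step h A (k + 1) hk

end GCS15

open scoped Classical

theorem stmt_15 (r : ℕ) (hr : 1 ≤ r) (X : Fin r → Type*)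
    [∀ i, Fintype (X i)] [∀ i, Nonempty (X i)] (h : (∀ i, X i) → ℝ)
    (A : (j : Fin r) → Set (∀ i : {i : Fin r // i ≠ j}, X i.1)) :
    |(∑ x : ∀ i, X i, h x * ∏ j, (A j).indicator 1 (fun i => x i.1)) /
        (Fintype.card (∀ i, X i) : ℝ)|
      ≤ ((∑ x : ∀ i : Fin r, Bool → X i,
            ∏ ω : Fin r → Bool, h (fun i => x i (ω i))) /
          (Fintype.card (∀ i : Fin r, Bool → X i) : ℝ)) ^ ((1 : ℝ) / 2 ^ r) := by
  rw [← GCS15.T_zero h A, ← GCS15.T_top h A]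
  obtain ⟨m, rfl⟩ : ∃ m, r = m + 1 := ⟨r - 1, by omega⟩
  have hpow : (GCS15.T h A 0) ^ (2 ^ (m + 1)) ≤ GCS15.T h A (m + 1) :=
    GCS15.chain h A m (Nat.lt_succ_self m)
  have h0pow : 0 ≤ (GCS15.T h A 0) ^ (2 ^ (m + 1)) := by
    rw [pow_succ, pow_mul]; exact sq_nonneg _
  have h2r : ((2 : ℝ) ^ (m + 1)) = ((2 ^ (m + 1) : ℕ) : ℝ) := by push_cast; ring
  calc |GCS15.T h A 0|
      = (|GCS15.T h A 0| ^ ((2 : ℝ) ^ (m + 1))) ^ ((1 : ℝ) / 2 ^ (m + 1)) := by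
        rw [← Real.rpow_mul (abs_nonneg _), mul_one_div,
          div_self (by positivity : ((2 : ℝ) ^ (m + 1)) ≠ 0), Real.rpow_one]
    _ = ((GCS15.T h A 0) ^ (2 ^ (m + 1) : ℕ)) ^ ((1 : ℝ) / 2 ^ (m + 1)) := by
        rw [h2r, Real.rpow_natCast, ← abs_pow, abs_of_nonneg h0pow]
    _ ≤ (GCS15.T h A (m + 1)) ^ ((1 : ℝ) / 2 ^ (m + 1)) :=
        Real.rpow_le_rpow (by positivity) hpow (by positivity)
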